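/- Let h be strictly increasing with h(i) ≥ 1 and growth condition P_n^(2(n+2)(h(n)+1)^3) < h(n+1), and let α = Σ_{i=0}^∞ P_i^(-h(i)). Then α is a Liouville number: for every positive integer m there exist integers p, q with q > 1 such that 0 < |α − p/q| < 1/q^m. -/

import Mathlib

/-- `P i` is the `i`-th prime number (`P 0 = 2`). -/
noncomputable def P (i : ℕ) : ℕ := Nat.nth Nat.Prime i

lemma P_prime (i : ℕ) : (P i).Prime := Nat.prime_nth_prime i

lemma P_two_le (i : ℕ) : 2 ≤ P i := (P_prime i).two_le

lemma P_mono : Monotone P := (Nat.nth_strictMono Nat.infinite_setOf_prime).monotone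

lemma strictMono_add_le (h : ℕ → ℕ) (hm : StrictMono h) (a i : ℕ) :
    h a + i ≤ h (a + i) := by
  induction i with
  | zero => simp
  | succ k ih =>
    have h1 : h (a + k) < h (a + k + 1) := hm (by omega)
    have h2 : a + (k + 1) = a + k + 1 := by omega
    rw [h2]
    omega

/-- `α = Σ_{i=0}^∞ P_i^(-h(i))` is a Liouville number. -/
theorem alpha_liouville
    (h : ℕ → ℕ) (hmono : StrictMono h) (hpos : ∀ i, 1 ≤ h i)
    (hgrow : ∀ n, P n ^ (2 * (n + 2) * (h n + 1) ^ 3) < h (n + 1)) :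
    Liouville (∑' i : ℕ, (P i : ℝ) ^ (-(h i : ℤ))) := by
  intro m
  set n := m + 1 with hn
  set f : ℕ → ℝ := fun i => (P i : ℝ) ^ (-(h i : ℤ)) with hf
  have hPpos : ∀ i, (0 : ℕ) < P i := fun i => by have := P_two_le i; omega
  have hPRpos : ∀ i, (0 : ℝ) < (P i : ℝ) := fun i => by exact_mod_cast hPpos i
  have hfi : ∀ i, f i = ((P i : ℝ) ^ h i)⁻¹ := by
    intro i
    rw [hf]
    simp [zpow_neg, zpow_natCast]
  have hfpos : ∀ i, 0 < f i := fun i => by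
    rw [hfi]; exact inv_pos.mpr (pow_pos (hPRpos i) _)
  have h_lb : ∀ i, i + 1 ≤ h i := by
    intro i
    have h1 := strictMono_add_le h hmono 0 i
    rw [Nat.zero_add] at h1
    have := hpos 0
    omega
  -- Summability
  have hb : ∀ i, f i ≤ (1 / 2 : ℝ) ^ i := by
    intro i
    rw [hfi i, show ((1:ℝ)/2) ^ i = ((2:ℝ) ^ i)⁻¹ by rw [one_div, inv_pow]]
    apply inv_anti₀ (by positivity)
    calc (2:ℝ) ^ i ≤ (P i : ℝ) ^ i := by
          apply pow_le_pow_left₀ (by norm_num)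
          exact_mod_cast P_two_le i
      _ ≤ (P i : ℝ) ^ h i := by
          apply pow_le_pow_right₀
          · exact_mod_cast (hPpos i)
          · have := h_lb i; omega
  have hsum : Summable f :=
    Summable.of_nonneg_of_le (fun i => (hfpos i).le) hb summable_geometric_two
  -- the rational approximation
  set Q : ℕ := ∏ i ∈ Finset.range (n + 1), P i ^ h i with hQdef
  set A : ℕ := ∑ i ∈ Finset.range (n + 1), Q / P i ^ h i with hAdef
  have hdvd : ∀ i ∈ Finset.range (n + 1), P i ^ h i ∣ Q :=
    fun i hi => Finset.dvd_prod_of_mem _ hi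
  have hQpos : 0 < Q := Finset.prod_pos fun i _ => pow_pos (hPpos i) _
  have hQR : (0:ℝ) < (Q:ℝ) := by exact_mod_cast hQpos
  have hpart : (A : ℝ) = ∑ i ∈ Finset.range (n + 1), (Q : ℝ) * f i := by
    rw [hAdef, Nat.cast_sum]
    refine Finset.sum_congr rfl fun i hi => ?_
    rw [Nat.cast_div (hdvd i hi) (by exact_mod_cast (pow_pos (hPpos i) (h i)).ne')]
    rw [hfi i, div_eq_mul_inv]
    push_cast
    ring
  have hpartial : (A : ℝ) / (Q : ℝ) = ∑ i ∈ Finset.range (n + 1), f i := by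
    rw [hpart, ← Finset.mul_sum, mul_div_cancel_left₀ _ hQR.ne']
  -- tail
  have htsum := hsum.sum_add_tsum_nat_add (n + 1)
  have htail_sum : Summable fun i => f (i + (n + 1)) :=
    (summable_nat_add_iff (n + 1)).2 hsum
  have hx : (∑' i, f i) - (A : ℝ) / (Q : ℝ) = ∑' i, f (i + (n + 1)) := by
    rw [hpartial]
    linarith [htsum]
  have htpos : 0 < ∑' i, f (i + (n + 1)) :=
    Summable.tsum_pos htail_sum (fun i => (hfpos _).le) 0 (hfpos _)
  -- termwise tail bound
  have hg : ∀ i, f (i + (n + 1)) ≤ ((P (n + 1) : ℝ) ^ h (n + 1))⁻¹ * (1 / 2 : ℝ) ^ i := by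
    intro i
    have key : P (n + 1) ^ h (n + 1) * 2 ^ i ≤ P (i + (n + 1)) ^ h (i + (n + 1)) := by
      have h1 : P (n + 1) ≤ P (i + (n + 1)) := P_mono (by omega)
      have h2 : 2 ≤ P (i + (n + 1)) := P_two_le _
      have h3 : h (n + 1) + i ≤ h (i + (n + 1)) := by
        have h4 := strictMono_add_le h hmono (n + 1) i
        rwa [Nat.add_comm (n + 1) i] at h4
      calc P (n + 1) ^ h (n + 1) * 2 ^ i
          ≤ P (i + (n + 1)) ^ h (n + 1) * P (i + (n + 1)) ^ i :=
            Nat.mul_le_mul (Nat.pow_le_pow_left h1 _) (Nat.pow_le_pow_left h2 _)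
        _ = P (i + (n + 1)) ^ (h (n + 1) + i) := (pow_add _ _ _).symm
        _ ≤ _ := Nat.pow_le_pow_right (by omega) h3
    rw [hfi, show ((P (n + 1) : ℝ) ^ h (n + 1))⁻¹ * (1 / 2 : ℝ) ^ i
        = ((P (n + 1) : ℝ) ^ h (n + 1) * 2 ^ i)⁻¹ by
          rw [mul_inv, one_div, inv_pow]]
    apply inv_anti₀
    · exact mul_pos (pow_pos (hPRpos _) _) (by positivity)
    · exact_mod_cast key
  have htail_le : (∑' i, f (i + (n + 1))) ≤ ((P (n + 1) : ℝ) ^ h (n + 1))⁻¹ * 2 := by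
    have hgs : Summable fun i => ((P (n + 1) : ℝ) ^ h (n + 1))⁻¹ * (1 / 2 : ℝ) ^ i :=
      summable_geometric_two.mul_left _
    have h5 := Summable.tsum_le_tsum hg htail_sum hgs
    rwa [tsum_mul_left, tsum_geometric_two] at h5
  -- the arithmetic inequality
  have hQle : Q ≤ P n ^ ((n + 1) * h n) := by
    calc Q ≤ ∏ _i ∈ Finset.range (n + 1), P n ^ h n := by
          apply Finset.prod_le_prod'
          intro i hi
          have hi' : i ≤ n := by
            simp only [Finset.mem_range] at hi; omega
          calc P i ^ h i ≤ P n ^ h i := Nat.pow_le_pow_left (P_mono hi') _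
            _ ≤ P n ^ h n := Nat.pow_le_pow_right (hPpos n) (hmono.monotone hi')
      _ = (P n ^ h n) ^ (n + 1) := by rw [Finset.prod_const, Finset.card_range]
      _ = P n ^ ((n + 1) * h n) := by rw [← pow_mul, Nat.mul_comm]
  have hexp : (n + 1) * h n * m ≤ 2 * (n + 2) * (h n + 1) ^ 3 := by
    have h1 : n + 1 ≤ h n := h_lb n
    have hm : m < n := by omega
    have h2 : m ≤ h n := by omega
    calc (n + 1) * h n * m ≤ h n * h n * h n := by
          gcongr <;> omega
      _ = h n ^ 3 := by ring
      _ ≤ (h n + 1) ^ 3 := Nat.pow_le_pow_left (by omega) 3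
      _ ≤ 2 * (n + 2) * (h n + 1) ^ 3 := Nat.le_mul_of_pos_left _ (by omega)
  have h2 : Q ^ m ≤ P n ^ (2 * (n + 2) * (h n + 1) ^ 3) := by
    calc Q ^ m ≤ (P n ^ ((n + 1) * h n)) ^ m := Nat.pow_le_pow_left hQle m
      _ = P n ^ ((n + 1) * h n * m) := by rw [← pow_mul]
      _ ≤ _ := Nat.pow_le_pow_right (hPpos n) hexp
  have h3 : Q ^ m < h (n + 1) := lt_of_le_of_lt h2 (hgrow n)
  have h4 : h (n + 1) ≤ 2 ^ (h (n + 1) - 1) := by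
    have h5 := Nat.lt_two_pow_self (n := h (n + 1) - 1)
    have := hpos (n + 1)
    omega
  have hnat : 2 * Q ^ m < P (n + 1) ^ h (n + 1) := by
    have h6 : 2 * 2 ^ (h (n + 1) - 1) = 2 ^ h (n + 1) := by
      rw [← pow_succ']
      congr 1
      have := hpos (n + 1)
      omega
    have h7 : 2 ^ h (n + 1) ≤ P (n + 1) ^ h (n + 1) := Nat.pow_le_pow_left (P_two_le _) _
    omega
  have hmain : ((P (n + 1) : ℝ) ^ h (n + 1))⁻¹ * 2 < 1 / (Q : ℝ) ^ m := by
    rw [inv_mul_eq_div, div_lt_div_iff₀ (pow_pos (hPRpos _) _) (pow_pos hQR m), one_mul]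
    exact_mod_cast hnat
  -- assemble
  refine ⟨(A : ℤ), (Q : ℤ), ?_, ?_, ?_⟩
  · have hQ2 : 2 ≤ Q := by
      have hm0 : (0 : ℕ) ∈ Finset.range (n + 1) := by simp
      have h8 : P 0 ^ h 0 ≤ Q :=
        Finset.single_le_prod' (fun i _ => Nat.one_le_iff_ne_zero.mpr (pow_pos (hPpos i) _).ne') hm0
      have h9 : 2 ≤ P 0 ^ h 0 :=
        le_trans (P_two_le 0) (Nat.le_self_pow (by have := hpos 0; omega) _)
      omega
    exact_mod_cast hQ2
  · push_cast
    intro hcontra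
    rw [hcontra] at hx
    simp at hx
    linarith
  · push_cast
    have habs : |(∑' i, f i) - (A : ℝ) / (Q : ℝ)| = ∑' i, f (i + (n + 1)) := by
      rw [hx] at *
      rw [← hx]
      exact abs_of_pos (by rw [hx]; exact htpos)
    rw [habs]
    exact lt_of_le_of_lt htail_le hmain
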